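/- Let A be the subalgebra of Γ = F[x,y]/(x² + y⁴ − 1) generated by 1, y², xy, and D the derivation of Γ with D(x) = 2y³, D(y) = −x. Then A is differentially simple with respect to D: every nonzero D-invariant ideal of A equals A. -/

import Mathlib

set_option synthInstance.maxHeartbeats 400000

open MvPolynomial

/-- The derivation `D = 2y³ ∂/∂x − x ∂/∂y` of `F[x,y]`. -/
noncomputable def Dxy (F : Type*) [Field F] :
    Derivation F (MvPolynomial (Fin 2) F) (MvPolynomial (Fin 2) F) :=
  mkDerivation F ![2 * X 1 ^ 3, - X 0]

/-- The quotient ring `Γ = F[x,y]/(x² + y⁴ − 1)`. -/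
abbrev Gam (F : Type*) [Field F] : Type _ :=
  MvPolynomial (Fin 2) F ⧸
    Ideal.span {(X 0 ^ 2 + X 1 ^ 4 - 1 : MvPolynomial (Fin 2) F)}

/-- The image of `x` in `Γ`. -/
noncomputable abbrev xG (F : Type*) [Field F] : Gam F := Ideal.Quotient.mk _ (X 0)

/-- The image of `y` in `Γ`. -/
noncomputable abbrev yG (F : Type*) [Field F] : Gam F := Ideal.Quotient.mk _ (X 1)

/-- The subalgebra `A` of `Γ` generated by `1`, `y²`, `xy`. -/
noncomputable abbrev AG (F : Type*) [Field F] : Subalgebra F (Gam F) :=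
  Algebra.adjoin F ({yG F ^ 2, xG F * yG F} : Set (Gam F))

set_option linter.unusedSectionVars false

namespace Stmt10Aux

open Polynomial

variable {F : Type*} [Field F] [CharZero F]

lemma polyaux (k : ℕ) (a : F) (P : Polynomial F) :
    (Polynomial.X - Polynomial.C a) * derivative ((Polynomial.X - Polynomial.C a) ^ k * P) =
      (Polynomial.X - Polynomial.C a) ^ k * ((k : Polynomial F) * P + (Polynomial.X - Polynomial.C a) * derivative P) := by
  cases k with
  | zero => simp
  | succ j =>
      rw [derivative_mul, derivative_pow]
      simp only [derivative_sub, derivative_X, derivative_C, sub_zero, Nat.add_sub_cancel,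
        Nat.cast_add, Nat.cast_one, Polynomial.C_add, Polynomial.C_1, ← Polynomial.C_eq_natCast]
      ring

lemma fderiv (k : ℕ) (a : F) (g : Polynomial F) :
    derivative ((Polynomial.X - Polynomial.C a) ^ (k + 1) * g) =
      (Polynomial.X - Polynomial.C a) ^ k * (((k : Polynomial F) + 1) * g + (Polynomial.X - Polynomial.C a) * derivative g) := by
  rw [derivative_mul, derivative_pow]
  simp only [derivative_sub, derivative_X, derivative_C, sub_zero, Nat.add_sub_cancel,
    Nat.cast_add, Nat.cast_one, Polynomial.C_add, Polynomial.C_1, ← Polynomial.C_eq_natCast]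
  ring

lemma key (σ τ τ₁ : Polynomial F) (α : F) (hτ : τ = (Polynomial.X - Polynomial.C α) * τ₁)
    (hσα : σ.eval α ≠ 0) (hτ₁α : τ₁.eval α = - σ.eval α)
    (f : Polynomial F) (hf : f ≠ 0) (hroot : f.eval α = 0)
    (hdvd : f ∣ σ * derivative f - 2 * τ * derivative (derivative f)) : False := by
  obtain ⟨g, hfg, hnd⟩ := f.exists_eq_pow_rootMultiplicity_mul_and_not_dvd hf α
  have hm : 0 < f.rootMultiplicity α := (rootMultiplicity_pos hf).mpr hroot
  obtain ⟨k, hk⟩ : ∃ k, f.rootMultiplicity α = k + 1 :=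
    ⟨f.rootMultiplicity α - 1, (Nat.succ_pred_eq_of_pos hm).symm⟩
  rw [hk] at hfg
  have hgα : g.eval α ≠ 0 := fun h => hnd (dvd_iff_isRoot.mpr h)
  set P : Polynomial F := ((k : Polynomial F) + 1) * g + (Polynomial.X - Polynomial.C α) * derivative g with hP
  have hf' : derivative f = (Polynomial.X - Polynomial.C α) ^ k * P := by rw [hfg, fderiv]
  have hkeyid : σ * derivative f - 2 * τ * derivative (derivative f) =
      (Polynomial.X - Polynomial.C α) ^ k * (σ * P - 2 * τ₁ * ((k : Polynomial F) * P + (Polynomial.X - Polynomial.C α) * derivative P)) := by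
    rw [hf', hτ]
    rw [show σ * ((Polynomial.X - Polynomial.C α) ^ k * P) - 2 * ((Polynomial.X - Polynomial.C α) * τ₁) * derivative ((Polynomial.X - Polynomial.C α) ^ k * P)
        = σ * ((Polynomial.X - Polynomial.C α) ^ k * P)
          - 2 * τ₁ * ((Polynomial.X - Polynomial.C α) * derivative ((Polynomial.X - Polynomial.C α) ^ k * P)) by ring, polyaux]
    ring
  set S : Polynomial F := σ * P - 2 * τ₁ * ((k : Polynomial F) * P + (Polynomial.X - Polynomial.C α) * derivative P)
    with hS
  have hdvd2 : (Polynomial.X - Polynomial.C α) ^ (k + 1) ∣ (Polynomial.X - Polynomial.C α) ^ k * S := by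
    rw [← hkeyid]
    exact dvd_trans ⟨g, hfg⟩ hdvd
  have hXCa : (Polynomial.X - Polynomial.C α) ∣ S := by
    rw [pow_succ] at hdvd2
    exact (mul_dvd_mul_iff_left (pow_ne_zero k (Polynomial.X_sub_C_ne_zero α))).mp hdvd2
  have hSα : S.eval α = 0 := by
    have := dvd_iff_isRoot.mp hXCa
    exact this
  have hPα : P.eval α = ((k : F) + 1) * g.eval α := by
    simp [hP, hroot]
  have : S.eval α = ((k : F) + 1) * g.eval α * (σ.eval α * (1 + 2 * (k : F))) := by
    simp [hS, hPα, hτ₁α]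
    ring
  rw [hSα] at this
  have h1 : ((k : F) + 1) ≠ 0 := Nat.cast_add_one_ne_zero k
  have h2 : (1 + 2 * (k : F)) ≠ 0 := by
    have h3 : ((2 * k + 1 : ℕ) : F) ≠ 0 := Nat.cast_ne_zero.mpr (by omega)
    intro h
    apply h3
    push_cast
    linear_combination h
  exact (mul_ne_zero (mul_ne_zero h1 hgα) (mul_ne_zero hσα h2)) this.symm

end Stmt10Aux

namespace Stmt10Aux
open Polynomial

variable {F : Type*} [Field F] [CharZero F]

lemma fderiv' (k : ℕ) (π g : Polynomial F) :
    derivative (π ^ (k + 1) * g) =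
      π ^ k * (((k : Polynomial F) + 1) * derivative π * g + π * derivative g) := by
  rw [derivative_mul, derivative_pow]
  simp only [Nat.add_sub_cancel, Nat.cast_add, Nat.cast_one, Polynomial.C_add, Polynomial.C_1, ← Polynomial.C_eq_natCast]
  ring

lemma assoc_dvd {π q f : Polynomial F} (hq : Irreducible q) (hπ : ¬IsUnit π)
    (h1 : π ∣ q) (h2 : π ∣ f) : q ∣ f := by
  obtain ⟨c, hc⟩ := h1
  rcases hq.isUnit_or_isUnit hc with h | h
  · exact absurd h hπ
  · obtain ⟨u, rfl⟩ := h
    refine dvd_trans ⟨(↑u⁻¹ : Polynomial F), ?_⟩ h2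
    rw [hc, mul_assoc]; simp

lemma root_of_dvd (f : Polynomial F) (hf : f ≠ 0) (hnu : ¬IsUnit f)
    (h1 : f ∣ (Polynomial.X - Polynomial.X ^ 3) * derivative f) :
    ∃ α : F, (α = 0 ∨ α = 1 ∨ α = -1) ∧ f.eval α = 0 := by
  obtain ⟨π, hπirr, hπf⟩ := WfDvdMonoid.exists_irreducible_factor hnu hf
  have hπp : Prime π := (UniqueFactorizationMonoid.irreducible_iff_prime).mp hπirr
  -- first show π ∣ Polynomial.X - Polynomial.X^3
  have hπτ : π ∣ Polynomial.X - Polynomial.X ^ 3 := by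
    by_contra hπτ
    have hfin : FiniteMultiplicity π f := FiniteMultiplicity.of_not_isUnit hπirr.not_isUnit hf
    obtain ⟨g, hfg, hnd⟩ := hfin.exists_eq_pow_mul_and_not_dvd
    have hm : multiplicity π f ≠ 0 := multiplicity_ne_zero.mpr hπf
    obtain ⟨k, hk⟩ : ∃ k, multiplicity π f = k + 1 :=
      ⟨multiplicity π f - 1, (Nat.succ_pred_eq_of_pos (Nat.pos_of_ne_zero hm)).symm⟩
    rw [hk] at hfg
    set P : Polynomial F := ((k : Polynomial F) + 1) * derivative π * g + π * derivative g
      with hP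
    have hdf : derivative f = π ^ k * P := by rw [hfg, fderiv']
    have hdvd2 : π ^ (k + 1) ∣ π ^ k * ((Polynomial.X - Polynomial.X ^ 3) * P) := by
      rw [show π ^ k * ((Polynomial.X - Polynomial.X ^ 3) * P) = (Polynomial.X - Polynomial.X ^ 3) * (π ^ k * P) by ring, ← hdf]
      exact dvd_trans ⟨g, hfg⟩ h1
    have hπ0 : π ≠ 0 := hπp.ne_zero
    have hπdvd : π ∣ (Polynomial.X - Polynomial.X ^ 3) * P := by
      rw [pow_succ] at hdvd2
      exact (mul_dvd_mul_iff_left (pow_ne_zero k hπ0)).mp hdvd2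
    rcases hπp.dvd_mul.mp hπdvd with h | h
    · exact hπτ h
    · -- π ∣ P
      have hπP2 : π ∣ ((k : Polynomial F) + 1) * (derivative π * g) := by
        have := dvd_sub h (Dvd.intro (derivative g) rfl)
        simpa [hP, mul_assoc] using this
      have hu : IsUnit ((k : Polynomial F) + 1) := by
        rw [show ((k : Polynomial F) + 1) = Polynomial.C ((k : F) + 1) by push_cast; simp]
        exact Polynomial.isUnit_C.mpr (Nat.cast_add_one_ne_zero k).isUnit
      have hπ' : π ∣ derivative π * g := by
        rcases hπp.dvd_mul.mp hπP2 with h' | h'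
        · exact absurd (isUnit_of_dvd_unit h' hu) hπp.not_unit
        · exact h'
      have hdegπ : π.natDegree ≠ 0 := by
        intro h0
        apply hπp.not_unit
        rw [Polynomial.eq_C_of_natDegree_eq_zero h0]
        refine Polynomial.isUnit_C.mpr (Ne.isUnit fun hc0 => hπ0 ?_)
        rw [Polynomial.eq_C_of_natDegree_eq_zero h0, hc0, map_zero]
      rcases hπp.dvd_mul.mp hπ' with h' | h'
      · have hd0 : derivative π ≠ 0 := by
          intro hz
          exact hdegπ (by rw [Polynomial.eq_C_of_derivative_eq_zero hz]; simp)
        have := natDegree_le_of_dvd h' hd0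
        exact absurd this (by simpa using (natDegree_derivative_lt hdegπ).not_ge)
      · exact hnd h'
  -- now π divides Polynomial.X(1-Polynomial.X)(1+Polynomial.X)
  have hfact : (Polynomial.X - Polynomial.X ^ 3 : Polynomial F) = Polynomial.X * ((1 - Polynomial.X) * (1 + Polynomial.X)) := by ring
  rw [hfact] at hπτ
  rcases hπp.dvd_mul.mp hπτ with h | h
  · refine ⟨0, Or.inl rfl, ?_⟩
    have : (Polynomial.X : Polynomial F) ∣ f := by
      refine assoc_dvd ?_ hπp.not_unit h hπf
      simpa using Polynomial.irreducible_X_sub_C (0 : F)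
    obtain ⟨c, rfl⟩ := this
    simp
  · rcases hπp.dvd_mul.mp h with h' | h'
    · refine ⟨1, Or.inr (Or.inl rfl), ?_⟩
      have hd : π ∣ Polynomial.X - Polynomial.C (1:F) := by
        have := (dvd_neg).mpr h'
        simpa [neg_sub] using this
      have : (Polynomial.X - Polynomial.C (1:F)) ∣ f := assoc_dvd (Polynomial.irreducible_X_sub_C (1:F)) hπp.not_unit hd hπf
      exact dvd_iff_isRoot.mp this
    · refine ⟨-1, Or.inr (Or.inr rfl), ?_⟩
      have hd : π ∣ Polynomial.X - Polynomial.C (-1:F) := by simpa [sub_neg_eq_add, add_comm] using h'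
      have : (Polynomial.X - Polynomial.C (-1:F)) ∣ f := assoc_dvd (Polynomial.irreducible_X_sub_C (-1:F)) hπp.not_unit hd hπf
      exact dvd_iff_isRoot.mp this

lemma poly_unit (f : Polynomial F) (hf : f ≠ 0)
    (h1 : f ∣ (Polynomial.X - Polynomial.X ^ 3) * derivative f)
    (h2 : f ∣ ((3 : Polynomial F) * Polynomial.X ^ 2 - 1) * derivative f
        - 2 * (Polynomial.X - Polynomial.X ^ 3) * derivative (derivative f)) : IsUnit f := by
  by_contra hnu
  obtain ⟨α, hα, hroot⟩ := root_of_dvd f hf hnu h1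
  rcases hα with rfl | rfl | rfl
  · exact key ((3 : Polynomial F) * Polynomial.X ^ 2 - 1) (Polynomial.X - Polynomial.X ^ 3) (1 - Polynomial.X ^ 2) 0
      (by simp; ring) (by norm_num) (by norm_num) f hf hroot h2
  · exact key ((3 : Polynomial F) * Polynomial.X ^ 2 - 1) (Polynomial.X - Polynomial.X ^ 3) (-Polynomial.X ^ 2 - Polynomial.X) 1
      (by rw [map_one]; ring) (by norm_num) (by norm_num) f hf hroot h2
  · exact key ((3 : Polynomial F) * Polynomial.X ^ 2 - 1) (Polynomial.X - Polynomial.X ^ 3) (-Polynomial.X ^ 2 + Polynomial.X) (-1)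
      (by simp only [map_neg, map_one]; ring) (by norm_num) (by norm_num) f hf hroot h2

end Stmt10Aux

namespace Stmt10Aux

variable (F : Type*) [Field F] [CharZero F]

noncomputable def EE : Polynomial F →ₐ[F] MvPolynomial (Fin 2) F := Polynomial.aeval (X 1 ^ 2)
noncomputable def tp : Polynomial F := Polynomial.X - Polynomial.X ^ 3
noncomputable def sp : Polynomial F := 3 * Polynomial.X ^ 2 - 1
noncomputable def rep (p q : Polynomial F) : Gam F :=
  Ideal.Quotient.mk _ (EE F p + EE F q * (X 0 * X 1))

lemma mk_eq_mk {a b : MvPolynomial (Fin 2) F}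
    (h : (X 0 ^ 2 + X 1 ^ 4 - 1 : MvPolynomial (Fin 2) F) ∣ a - b) :
    (Ideal.Quotient.mk (Ideal.span {(X 0 ^ 2 + X 1 ^ 4 - 1 : MvPolynomial (Fin 2) F)}) a)
      = Ideal.Quotient.mk _ b :=
  Ideal.Quotient.eq.mpr (Ideal.mem_span_singleton.mpr h)

lemma EE_tp : EE F (tp F) = X 1 ^ 2 - X 1 ^ 6 := by
  simp only [EE, tp, map_sub, map_pow, Polynomial.aeval_X]; ring

lemma EE_sp : EE F (sp F) = 3 * X 1 ^ 4 - 1 := by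
  simp only [EE, sp, map_sub, map_mul, map_pow, map_one, map_ofNat, Polynomial.aeval_X]; ring

-- derivation computations
lemma Dxy_X0 : Dxy F (X 0) = 2 * X 1 ^ 3 := by
  rw [Dxy, mkDerivation_X]; simp

lemma Dxy_X1 : Dxy F (X 1) = - X 0 := by
  rw [Dxy, mkDerivation_X]; simp

lemma Dxy_y2 : Dxy F (X 1 ^ 2) = -(2 * X 0 * X 1) := by
  rw [sq, Derivation.leibniz, Dxy_X1]
  simp only [smul_eq_mul]
  ring

lemma Dxy_EE (r : Polynomial F) :
    Dxy F (EE F r) = EE F (Polynomial.derivative r) * -(2 * X 0 * X 1) := by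
  show Dxy F (Polynomial.aeval (X 1 ^ 2) r) = _
  rw [Derivation.map_aeval, Dxy_y2, smul_eq_mul]
  rfl

lemma Dxy_xy : Dxy F (X 0 * X 1) = 2 * X 1 ^ 4 - X 0 ^ 2 := by
  rw [Derivation.leibniz, Dxy_X0, Dxy_X1, smul_eq_mul, smul_eq_mul]; ring

lemma rep_D (D' : Derivation F (Gam F) (Gam F))
    (hD' : ∀ p : MvPolynomial (Fin 2) F,
      D' (Ideal.Quotient.mk _ p) = Ideal.Quotient.mk _ (Dxy F p))
    (p q : Polynomial F) :
    D' (rep F p q) =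
      rep F (q * sp F - 2 * Polynomial.derivative q * tp F)
        (-2 * Polynomial.derivative p) := by
  unfold rep
  rw [hD']
  apply mk_eq_mk
  refine ⟨-(EE F q + 2 * X 1 ^ 2 * EE F (Polynomial.derivative q)), ?_⟩
  rw [map_add (Dxy F), Derivation.leibniz, Dxy_EE, Dxy_EE, Dxy_xy, smul_eq_mul, smul_eq_mul]
  simp only [map_sub, map_mul, map_neg, map_ofNat, EE_sp, EE_tp]
  ring

lemma rep_mem (p q : Polynomial F) : rep F p q ∈ AG F := by
  have hu : yG F ^ 2 ∈ AG F := Algebra.subset_adjoin (Set.mem_insert _ _)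
  have hw : xG F * yG F ∈ AG F := Algebra.subset_adjoin (Set.mem_insert_of_mem _ rfl)
  have hmk : ∀ r : Polynomial F,
      (Ideal.Quotient.mk (Ideal.span {(X 0 ^ 2 + X 1 ^ 4 - 1 : MvPolynomial (Fin 2) F)})
        (EE F r) : Gam F) = Polynomial.aeval (yG F ^ 2) r := by
    intro r
    have : (Ideal.Quotient.mk (Ideal.span {(X 0 ^ 2 + X 1 ^ 4 - 1 : MvPolynomial (Fin 2) F)})
        (EE F r) : Gam F) = Ideal.Quotient.mkₐ F _ (Polynomial.aeval (X 1 ^ 2) r) := rfl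
    rw [this, ← Polynomial.aeval_algHom_apply]
    congr 1
  have h1 : rep F p q = Polynomial.aeval (yG F ^ 2) p
      + Polynomial.aeval (yG F ^ 2) q * (xG F * yG F) := by
    unfold rep
    rw [map_add, map_mul, hmk, hmk, map_mul]
  rw [h1]
  refine Subalgebra.add_mem _ ?_ (Subalgebra.mul_mem _ ?_ hw)
  · rw [show (yG F ^ 2) = ((⟨yG F ^ 2, hu⟩ : AG F) : Gam F) from rfl,
      Subalgebra.aeval_coe]
    exact SetLike.coe_mem _
  · rw [show (yG F ^ 2) = ((⟨yG F ^ 2, hu⟩ : AG F) : Gam F) from rfl,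
      Subalgebra.aeval_coe]
    exact SetLike.coe_mem _

lemma rep_add (p q r s : Polynomial F) :
    rep F p q + rep F r s = rep F (p + r) (q + s) := by
  unfold rep; rw [← map_add]; congr 1; simp only [map_add]; ring

lemma rep_mul (p q r s : Polynomial F) :
    rep F p q * rep F r s = rep F (p * r + q * s * tp F) (p * s + q * r) := by
  unfold rep
  rw [← map_mul]
  apply mk_eq_mk
  exact ⟨EE F q * EE F s * X 1 ^ 2, by simp only [map_add, map_mul, EE_tp]; ring⟩

lemma rep_surj (a : Gam F) (ha : a ∈ AG F) : ∃ p q, a = rep F p q := by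
  induction ha using Algebra.adjoin_induction with
  | mem x hx =>
      rcases hx with rfl | hx
      · exact ⟨Polynomial.X, 0, by unfold rep EE; simp⟩
      · rcases hx with rfl
        exact ⟨0, 1, by unfold rep EE; simp⟩
  | algebraMap r =>
      refine ⟨Polynomial.C r, 0, ?_⟩
      unfold rep EE
      simp only [Polynomial.aeval_C, map_zero, zero_mul, add_zero]
      exact ((Ideal.Quotient.mkₐ F _).commutes r).symm
  | add x y hx hy ihx ihy =>
      obtain ⟨p, q, rfl⟩ := ihx
      obtain ⟨r, s, rfl⟩ := ihy
      exact ⟨p + r, q + s, (rep_add F p q r s)⟩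
  | mul x y hx hy ihx ihy =>
      obtain ⟨p, q, rfl⟩ := ihx
      obtain ⟨r, s, rfl⟩ := ihy
      exact ⟨p * r + q * s * tp F, p * s + q * r, (rep_mul F p q r s)⟩

lemma rep_inj (p q : Polynomial F) (h : rep F p q = 0) : p = 0 ∧ q = 0 := by
  unfold rep at h
  rw [Ideal.Quotient.eq_zero_iff_mem, Ideal.mem_span_singleton] at h
  set Y : MvPolynomial (Fin 1) F := X 0 with hY
  set φ := MvPolynomial.finSuccEquiv F 1 with hφ
  have hd := map_dvd φ h
  have hX1 : (X 1 : MvPolynomial (Fin 2) F) = X (Fin.succ 0) := rfl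
  have hφg : φ ((X 0 ^ 2 + X 1 ^ 4 - 1 : MvPolynomial (Fin 2) F))
      = Polynomial.X ^ 2 + Polynomial.C (Y ^ 4 - 1) := by
    rw [hX1, map_sub, map_add, map_pow, map_pow, map_one, finSuccEquiv_X_zero,
      finSuccEquiv_X_succ, map_sub Polynomial.C, map_one, ← map_pow]
    ring
  have hφE : ∀ r : Polynomial F,
      φ (EE F r) = Polynomial.C (Polynomial.aeval (Y ^ 2) r) := by
    intro r
    have h1 : φ (EE F r) = Polynomial.aeval (φ (X 1 ^ 2)) r :=
      (Polynomial.aeval_algHom_apply φ (X 1 ^ 2) r).symm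
    rw [h1, hX1, map_pow, finSuccEquiv_X_succ, ← map_pow, ← Polynomial.algebraMap_eq,
      Polynomial.aeval_algebraMap_apply, Polynomial.algebraMap_eq]
  have hφW : φ ((EE F) p + (EE F) q * (X 0 * X 1))
      = Polynomial.C (Polynomial.aeval (Y ^ 2) p)
        + Polynomial.C ((Polynomial.aeval (Y ^ 2) q) * Y) * Polynomial.X := by
    rw [map_add, map_mul, map_mul, hφE, hφE, hX1, finSuccEquiv_X_zero, finSuccEquiv_X_succ,
      map_mul Polynomial.C]
    ring
  rw [hφg, hφW] at hd
  have hdeg : Polynomial.degree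
      ((Polynomial.X : Polynomial (MvPolynomial (Fin 1) F)) ^ 2 + Polynomial.C (Y ^ 4 - 1))
      = 2 := Polynomial.degree_X_pow_add_C (by norm_num) _
  have hW0 : Polynomial.C (Polynomial.aeval (Y ^ 2) p)
      + Polynomial.C ((Polynomial.aeval (Y ^ 2) q) * Y) * Polynomial.X = 0 := by
    refine Polynomial.eq_zero_of_dvd_of_degree_lt hd ?_
    rw [hdeg]
    refine lt_of_le_of_lt (Polynomial.degree_add_le _ _) ?_
    rw [max_lt_iff]
    constructor
    · exact lt_of_le_of_lt Polynomial.degree_C_le (by norm_num)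
    · refine lt_of_le_of_lt (Polynomial.degree_mul_le _ _) ?_
      have h1 := Polynomial.degree_C_le (a := (Polynomial.aeval (Y ^ 2) q) * Y)
      have h2 := Polynomial.degree_X_le (R := MvPolynomial (Fin 1) F)
      calc Polynomial.degree (Polynomial.C ((Polynomial.aeval (Y ^ 2) q) * Y))
            + Polynomial.degree (Polynomial.X : Polynomial (MvPolynomial (Fin 1) F))
          ≤ 0 + 1 := add_le_add h1 h2
        _ < 2 := by norm_num
  have hP : Polynomial.aeval (Y ^ 2) p = 0 := by
    have := congrArg (fun r => Polynomial.coeff r 0) hW0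
    simpa using this
  have hQY : (Polynomial.aeval (Y ^ 2) q) * Y = 0 := by
    have := congrArg (fun r => Polynomial.coeff r 1) hW0
    simpa using this
  have hQ : Polynomial.aeval (Y ^ 2) q = 0 := by
    rcases mul_eq_zero.mp hQY with h' | h'
    · exact h'
    · exact absurd h' (MvPolynomial.X_ne_zero 0)
  have key : ∀ r : Polynomial F, Polynomial.aeval (Y ^ 2) r = 0 → r = 0 := by
    intro r hr
    have h1 := congrArg (MvPolynomial.aeval (fun _ : Fin 1 => (Polynomial.X : Polynomial F))) hr
    rw [map_zero, ← Polynomial.aeval_algHom_apply] at h1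
    have h2 : (MvPolynomial.aeval (fun _ : Fin 1 => (Polynomial.X : Polynomial F))) (Y ^ 2)
        = Polynomial.X ^ 2 := by simp [hY]
    rw [h2, ← Polynomial.comp_eq_aeval] at h1
    rcases Polynomial.comp_eq_zero_iff.mp h1 with h' | ⟨_, h'⟩
    · exact h'
    · exfalso
      have := congrArg Polynomial.natDegree h'
      simp [Polynomial.natDegree_X_pow] at this
  exact ⟨key p hP, key q hQ⟩

lemma rep_zero : rep F 0 0 = 0 := by unfold rep; simp

lemma rep_one : rep F 1 0 = 1 := by unfold rep; simp

lemma dvd_of_dvd_neg_two_mul (f g : Polynomial F) (h : f ∣ -2 * g) : f ∣ g := by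
  have h2 : f ∣ Polynomial.C ((-2 : F)⁻¹) * (-2 * g) := h.mul_left _
  have h3 : Polynomial.C ((-2 : F)⁻¹) * (-2 * g) = g := by
    rw [show ((-2 : Polynomial F)) = Polynomial.C ((-2 : F)) by rw [map_neg, map_ofNat],
      ← mul_assoc, ← Polynomial.C_mul,
      show ((-2 : F)⁻¹ * (-2) : F) = 1 by norm_num, Polynomial.C_1, one_mul]
  rwa [h3] at h2

lemma tp_natDegree : (tp F).natDegree = 3 := by
  unfold tp
  compute_degree!

lemma tp_ne_zero : tp F ≠ 0 := by
  intro h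
  have := congrArg Polynomial.natDegree h
  rw [tp_natDegree] at this
  simp at this

end Stmt10Aux


open Stmt10Aux in
set_option maxHeartbeats 1000000 in
/-- `A` is differentially simple with respect to (the restriction to `A` of) the
induced derivation `D`: every nonzero `D`-invariant ideal of `A` equals `A`. -/
theorem stmt10 (F : Type*) [Field F] [CharZero F]
    (D' : Derivation F (Gam F) (Gam F))
    (hD' : ∀ p : MvPolynomial (Fin 2) F,
      D' (Ideal.Quotient.mk _ p) = Ideal.Quotient.mk _ (Dxy F p))
    (hDA : ∀ a : AG F, D' (a : Gam F) ∈ AG F)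
    (I : Ideal (AG F)) (hI : I ≠ ⊥)
    (hinv : ∀ a : AG F, a ∈ I → (⟨D' (a : Gam F), hDA a⟩ : AG F) ∈ I) :
    I = ⊤ := by
  classical
  set M : Polynomial F → Polynomial F → Prop :=
    fun p q => (⟨rep F p q, rep_mem F p q⟩ : AG F) ∈ I with hM
  have Mcast : ∀ p q p' q' : Polynomial F, p = p' → q = q' → M p q → M p' q' := by
    rintro p q p' q' rfl rfl h; exact h
  have Madd : ∀ p q r s : Polynomial F, M p q → M r s → M (p + r) (q + s) := by
    intro p q r s h1 h2
    have h3 := I.add_mem h1 h2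
    have h4 : (⟨rep F p q, rep_mem F p q⟩ + ⟨rep F r s, rep_mem F r s⟩ : AG F)
        = ⟨rep F (p + r) (q + s), rep_mem F _ _⟩ := Subtype.ext (rep_add F p q r s)
    rwa [h4] at h3
  have Mmul : ∀ p q r s : Polynomial F, M p q → M (p * r + q * s * tp F) (p * s + q * r) := by
    intro p q r s h1
    have h3 := I.mul_mem_right (⟨rep F r s, rep_mem F r s⟩ : AG F) h1
    have h4 : ((⟨rep F p q, rep_mem F p q⟩ : AG F) * ⟨rep F r s, rep_mem F r s⟩ : AG F)
        = ⟨rep F (p * r + q * s * tp F) (p * s + q * r), rep_mem F _ _⟩ :=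
      Subtype.ext (rep_mul F p q r s)
    rwa [h4] at h3
  have MD : ∀ p q : Polynomial F, M p q →
      M (q * sp F - 2 * Polynomial.derivative q * tp F) (-2 * Polynomial.derivative p) := by
    intro p q h1
    have h3 := hinv _ h1
    have h4 : (⟨D' ((⟨rep F p q, rep_mem F p q⟩ : AG F) : Gam F), hDA _⟩ : AG F)
        = ⟨rep F (q * sp F - 2 * Polynomial.derivative q * tp F)
            (-2 * Polynomial.derivative p), rep_mem F _ _⟩ :=
      Subtype.ext (rep_D F D' hD' p q)
    rwa [h4] at h3
  -- a nonzero element of I, written as rep p q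
  obtain ⟨a, haI, ha0⟩ := (Submodule.ne_bot_iff I).mp hI
  obtain ⟨p, q, hpq⟩ := rep_surj F (a : Gam F) a.2
  have hMpq : M p q := by
    have h5 : (⟨rep F p q, rep_mem F p q⟩ : AG F) = a := Subtype.ext hpq.symm
    show (⟨rep F p q, rep_mem F p q⟩ : AG F) ∈ I
    rw [h5]; exact haI
  have hpq0 : ¬(p = 0 ∧ q = 0) := by
    rintro ⟨rfl, rfl⟩
    exact ha0 (Subtype.ext (by rw [hpq, rep_zero]; rfl))
  -- the "norm" trick : a nonzero element of I ∩ F[u]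
  have hnorm : M (p * p - q * q * tp F) 0 :=
    Mcast _ _ _ _ (by ring) (by ring) (Mmul p q p (-q) hMpq)
  have hnorm0 : p * p - q * q * tp F ≠ 0 := by
    intro h
    have heq : p * p = q * q * tp F := by linear_combination h
    have hq : q = 0 := by
      by_contra hq
      have hp : p ≠ 0 := by
        intro hp
        rw [hp, mul_zero] at heq
        rcases mul_eq_zero.mp heq.symm with h' | h'
        · exact hq (by rcases mul_eq_zero.mp h' with h'' | h'' <;> exact h'')
        · exact tp_ne_zero F h'
      have hdeg := congrArg Polynomial.natDegree heq
      rw [Polynomial.natDegree_mul hp hp, Polynomial.natDegree_mul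
        (mul_ne_zero hq hq) (tp_ne_zero F), Polynomial.natDegree_mul hq hq,
        tp_natDegree] at hdeg
      omega
    rw [hq] at heq
    simp only [zero_mul, mul_zero] at heq
    rcases mul_eq_zero.mp heq with h' | h' <;> exact hpq0 ⟨h', hq⟩
  -- minimal degree monic element of J = I ∩ F[u]
  set S : Set ℕ := {n | ∃ f : Polynomial F, M f 0 ∧ f ≠ 0 ∧ f.natDegree = n} with hS
  have hSne : S.Nonempty := ⟨_, _, hnorm, hnorm0, rfl⟩
  obtain ⟨f₀, hf₀M, hf₀0, hf₀deg⟩ := Nat.sInf_mem hSne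
  have hmin : ∀ g : Polynomial F, M g 0 → g ≠ 0 → f₀.natDegree ≤ g.natDegree := by
    intro g hg hg0
    rw [hf₀deg]
    exact Nat.sInf_le ⟨g, hg, hg0, rfl⟩
  -- make it monic
  set f : Polynomial F := f₀ * Polynomial.C (f₀.leadingCoeff)⁻¹ with hf
  have hfmonic : f.Monic := Polynomial.monic_mul_leadingCoeff_inv hf₀0
  have hfM : M f 0 :=
    Mcast _ _ _ _ (by ring) (by ring) (Mmul f₀ 0 (Polynomial.C (f₀.leadingCoeff)⁻¹) 0 hf₀M)
  have hf0 : f ≠ 0 := hfmonic.ne_zero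
  have hfdeg : f.natDegree = f₀.natDegree :=
    Polynomial.natDegree_mul_C (inv_ne_zero (Polynomial.leadingCoeff_ne_zero.mpr hf₀0))
  -- f divides everything in J
  have hdvd : ∀ g : Polynomial F, M g 0 → f ∣ g := by
    intro g hg
    rw [← Polynomial.modByMonic_eq_zero_iff_dvd hfmonic]
    by_contra hr
    have hrM : M (g %ₘ f) 0 := by
      have h1 : M (f * (g /ₘ f)) 0 :=
        Mcast _ _ _ _ (by ring) (by ring) (Mmul f 0 (g /ₘ f) 0 hfM)
      have h2 : M (-(f * (g /ₘ f))) 0 :=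
        Mcast _ _ _ _ (by ring) (by ring) (Mmul (f * (g /ₘ f)) 0 (-1) 0 h1)
      have h3 := Madd _ _ _ _ hg h2
      exact Mcast _ _ _ _ (by rw [Polynomial.modByMonic_eq_sub_mul_div g f]; ring)
        (by ring) h3
    have := hmin _ hrM hr
    rw [← hfdeg] at this
    exact absurd (Polynomial.natDegree_lt_natDegree hr
      (Polynomial.degree_modByMonic_lt g hfmonic)) (not_lt.mpr this)
  -- D-invariance gives the two divisibility conditions
  have hD1 : M 0 (-2 * Polynomial.derivative f) :=
    Mcast _ _ _ _ (by simp) (by ring) (MD f 0 hfM)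
  have hd1 : f ∣ (Polynomial.X - Polynomial.X ^ 3) * Polynomial.derivative f := by
    have h1 : M (-2 * (tp F * Polynomial.derivative f)) 0 :=
      Mcast _ _ _ _ (by ring) (by ring) (Mmul 0 (-2 * Polynomial.derivative f) 0 1 hD1)
    have := dvd_of_dvd_neg_two_mul F f _ (hdvd _ h1)
    rw [tp] at this
    exact this
  have hd2 : f ∣ (3 * Polynomial.X ^ 2 - 1) * Polynomial.derivative f
      - 2 * (Polynomial.X - Polynomial.X ^ 3)
        * Polynomial.derivative (Polynomial.derivative f) := by
    have h1 : M (-2 * (sp F * Polynomial.derivative f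
        - 2 * tp F * Polynomial.derivative (Polynomial.derivative f))) 0 :=
      Mcast _ _ _ _ (by simp; ring) (by simp) (MD 0 (-2 * Polynomial.derivative f) hD1)
    have := dvd_of_dvd_neg_two_mul F f _ (hdvd _ h1)
    rw [tp, sp] at this
    exact this
  -- hence f is a unit, so f = 1 and 1 ∈ I
  have hone : f = 1 := hfmonic.eq_one_of_isUnit (poly_unit f hf0 hd1 hd2)
  rw [Ideal.eq_top_iff_one]
  have : (⟨rep F 1 0, rep_mem F 1 0⟩ : AG F) = 1 := Subtype.ext (show rep F 1 0 = ((1 : AG F) : Gam F) by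
      rw [rep_one F]; exact (OneMemClass.coe_one _).symm)
  rw [← this]
  exact Mcast _ _ _ _ hone rfl hfM
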